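/- arXiv:1012.4495 — 4 statements merged into one kernel-verified Lean document; each statement's English description precedes it below -/
import Mathlib

section
/- Let M be a compact oriented Riemannian manifold with boundary. Suppose G is a p-form that is closed, coclosed, and its pullback to the boundary is exact: i*G = dC′ for some (p−1)-form C′ on ∂M. Suppose ξ is a (p+1)-form satisfying the Neumann condition i*(*ξ) = 0 with i*(*d*ξ) = 0. Then ⟨G, d*ξ⟩_{L²} = 0. -/
/-- Abstract data of Hodge theory on a compact oriented Riemannian `n`-manifold `M`
with boundary `∂M`.  Here `Ω p` plays the role of the space of smooth `p`-forms on `M`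
and `Ωb p` that of `p`-forms on `∂M`; `d` is the exterior derivative, `δ` the
codifferential `d^*`, `star` the Hodge star, `pull` the pullback `i^*` along the
inclusion `i : ∂M → M`, `db` the exterior derivative of `∂M`, `inn` the `L²` inner
product `⟨σ,τ⟩ = ∫_M σ ∧ *τ`, and `bint p α β = ∫_{∂M} α ∧ β` for `α` a `p`-form and
`β` an `(n-1-p)`-form on the boundary.  The axioms are the standard identities,
in particular `green` is Green's formula. -/
structure HodgeData (n : ℕ) (Ω : ℕ → Type) [∀ p, AddCommGroup (Ω p)]
    [∀ p, Module ℝ (Ω p)] (Ωb : ℕ → Type) [∀ p, AddCommGroup (Ωb p)]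
    [∀ p, Module ℝ (Ωb p)] : Type where
  d : ∀ p, Ω p →ₗ[ℝ] Ω (p + 1)
  δ : ∀ p, Ω p →ₗ[ℝ] Ω (p - 1)
  star : ∀ p, Ω p →ₗ[ℝ] Ω (n - p)
  pull : ∀ p, Ω p →ₗ[ℝ] Ωb p
  db : ∀ p, Ωb p →ₗ[ℝ] Ωb (p + 1)
  inn : ∀ p, Ω p →ₗ[ℝ] Ω p →ₗ[ℝ] ℝ
  bint : ∀ p, Ωb p →ₗ[ℝ] Ωb (n - p - 1) →ₗ[ℝ] ℝ
  inn_symm : ∀ p (α β : Ω p), inn p α β = inn p β α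
  inn_self_nonneg : ∀ p (α : Ω p), 0 ≤ inn p α α
  inn_def : ∀ p (α : Ω p), inn p α α = 0 → α = 0
  d_d : ∀ p (α : Ω p), d (p + 1) (d p α) = 0
  pull_d : ∀ p (α : Ω p), pull (p + 1) (d p α) = db p (pull p α)
  pull_surj : ∀ p, Function.Surjective (pull p)
  star_star : ∀ p (hp : p ≤ n) (ω : Ω p),
    star (n - p) (star p ω)
      = ((-1 : ℝ) ^ (p * (n - p))) • cast (congrArg Ω (Nat.sub_sub_self hp).symm) ω
  green : ∀ p (α : Ω p) (β : Ω (p + 1)),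
    inn (p + 1) (d p α) β - inn p α (δ (p + 1) β)
      = bint p (pull p α) (pull (n - (p + 1)) (star (p + 1) β))

/-- Let `G` be a `(p+1)`-form which is closed, coclosed, and whose
pullback to the boundary is exact, `i^*G = dC'` for some `p`-form `C'` on `∂M`.
Let `ξ` be a `(p+2)`-form satisfying the Neumann condition `i^*(*ξ) = 0` and such
that `i^*(*d^*ξ) = 0`.  Then `⟨G, d^*ξ⟩_{L²} = 0`. -/
theorem boundary_exact_orth_coexact_neumann
    {n : ℕ} {Ω : ℕ → Type} [∀ p, AddCommGroup (Ω p)] [∀ p, Module ℝ (Ω p)]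
    {Ωb : ℕ → Type} [∀ p, AddCommGroup (Ωb p)] [∀ p, Module ℝ (Ωb p)]
    (H : HodgeData n Ω Ωb) (p : ℕ)
    (G : Ω (p + 1)) (hGclosed : H.d (p + 1) G = 0) (hGcoclosed : H.δ (p + 1) G = 0)
    (C' : Ωb p) (hGbd : H.pull (p + 1) G = H.db p C')
    (ξ : Ω (p + 2))
    (hξN : H.pull (n - (p + 2)) (H.star (p + 2) ξ) = 0)
    (hδξN : H.pull (n - (p + 1)) (H.star (p + 1) (H.δ (p + 2) ξ)) = 0) :
    H.inn (p + 1) G (H.δ (p + 2) ξ) = 0 := by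
  have h := H.green (p + 1) G ξ
  rw [hGclosed, hξN] at h
  simp at h
  exact h
end

section
/- Let 0 ≤ r < π/2 and define f(r) = (1 − sin⁶ r)/√((1 + sin⁶ r)² + (1/2) sin⁶ r). Then f(r) ∈ [0, 1) for r ∈ (0, π/2), f is strictly decreasing on (0, π/2), f(r) → 1 as r → 0⁺, and f(r) → 0 as r → π/2⁻. Hence the Poincaré duality angle θ(r) = arccos f(r) tends to 0 as r → 0 and to π/2 as r → π/2. -/
open Real Filter Set

/-- The cosine of the Poincaré duality angle in degree 4 for `ℂP⁶` minus an open
ball of radius `r`. -/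
noncomputable def pdCos (r : ℝ) : ℝ :=
  (1 - Real.sin r ^ 6) / Real.sqrt ((1 + Real.sin r ^ 6) ^ 2 + (1 / 2) * Real.sin r ^ 6)

lemma pd_sqrt_pos {s : ℝ} (hs : 0 ≤ s) :
    0 < Real.sqrt ((1 + s) ^ 2 + (1 / 2) * s) := by
  apply Real.sqrt_pos.2
  nlinarith

lemma pd_g_anti {a b : ℝ} (ha : 0 ≤ a) (hab : a < b) (hb : b < 1) :
    (1 - b) / Real.sqrt ((1 + b) ^ 2 + (1 / 2) * b) <
      (1 - a) / Real.sqrt ((1 + a) ^ 2 + (1 / 2) * a) := by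
  have hb0 : (0:ℝ) ≤ b := le_of_lt (lt_of_le_of_lt ha hab)
  have hsa := pd_sqrt_pos ha
  have hsb := pd_sqrt_pos hb0
  rw [div_lt_div_iff₀ hsb hsa]
  have h1 : (1 - b) * Real.sqrt ((1 + a) ^ 2 + (1 / 2) * a)
      = Real.sqrt ((1 - b) ^ 2 * ((1 + a) ^ 2 + (1 / 2) * a)) := by
    rw [Real.sqrt_mul (by positivity), Real.sqrt_sq (by linarith)]
  have h2 : (1 - a) * Real.sqrt ((1 + b) ^ 2 + (1 / 2) * b)
      = Real.sqrt ((1 - a) ^ 2 * ((1 + b) ^ 2 + (1 / 2) * b)) := by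
    rw [Real.sqrt_mul (by positivity), Real.sqrt_sq (by nlinarith)]
  rw [h1, h2]
  apply Real.sqrt_lt_sqrt (by positivity)
  nlinarith [mul_pos (sub_pos.2 hab) (by nlinarith : (0:ℝ) < 1 - a * b)]

lemma pdCos_continuous : Continuous pdCos := by
  apply Continuous.div
  · fun_prop
  · fun_prop
  · intro x
    have h := pd_sqrt_pos (s := Real.sin x ^ 6) (by positivity)
    exact ne_of_gt h

lemma pdCos_zero : pdCos 0 = 1 := by
  simp [pdCos]

lemma pdCos_pi_div_two : pdCos (π / 2) = 0 := by
  simp [pdCos]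

/-- For `f(r) = (1 − sin⁶ r)/√((1 + sin⁶ r)² + (1/2) sin⁶ r)`:
`f(r) ∈ [0,1)` for `r ∈ (0, π/2)`; `f` is strictly decreasing on `(0, π/2)`;
`f(r) → 1` as `r → 0⁺` and `f(r) → 0` as `r → π/2⁻`.  Hence the Poincaré duality
angle `θ(r) = arccos f(r)` tends to `0` as `r → 0⁺` and to `π/2` as `r → π/2⁻`. -/
theorem pdCos_properties :
    (∀ r ∈ Ioo (0 : ℝ) (π / 2), pdCos r ∈ Ico (0 : ℝ) 1) ∧
    StrictAntiOn pdCos (Ioo (0 : ℝ) (π / 2)) ∧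
    Tendsto pdCos (nhdsWithin 0 (Ioi (0 : ℝ))) (nhds 1) ∧
    Tendsto pdCos (nhdsWithin (π / 2) (Iio (π / 2))) (nhds 0) ∧
    Tendsto (fun r => Real.arccos (pdCos r)) (nhdsWithin 0 (Ioi (0 : ℝ))) (nhds 0) ∧
    Tendsto (fun r => Real.arccos (pdCos r)) (nhdsWithin (π / 2) (Iio (π / 2)))
      (nhds (π / 2)) := by
  have hsin : ∀ r ∈ Ioo (0 : ℝ) (π / 2), 0 < Real.sin r ∧ Real.sin r < 1 := by
    intro r hr
    constructor
    · exact Real.sin_pos_of_pos_of_lt_pi hr.1 (hr.2.trans (by linarith [Real.pi_pos]))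
    · have := Real.strictMonoOn_sin
        (a := r) (b := π / 2)
        ⟨by linarith [hr.1, Real.pi_pos], le_of_lt hr.2⟩
        ⟨by linarith [Real.pi_pos], le_refl _⟩ hr.2
      simpa using this
  have h1 : ∀ r ∈ Ioo (0 : ℝ) (π / 2), pdCos r ∈ Ico (0 : ℝ) 1 := by
    intro r hr
    obtain ⟨hp, hlt⟩ := hsin r hr
    set s := Real.sin r ^ 6 with hs
    have hs0 : 0 < s := by positivity
    have hs1 : s < 1 := by
      calc s < 1 ^ 6 := pow_lt_pow_left₀ hlt (le_of_lt hp) (by norm_num)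
      _ = 1 := by norm_num
    have hsq := pd_sqrt_pos (le_of_lt hs0)
    simp only [pdCos, ← hs]
    constructor
    · exact div_nonneg (by linarith) (le_of_lt hsq)
    · rw [div_lt_one hsq]
      have : (1 - s) = Real.sqrt ((1 - s) ^ 2) := (Real.sqrt_sq (by linarith)).symm
      rw [this]
      exact Real.sqrt_lt_sqrt (by positivity) (by nlinarith)
  have h2 : StrictAntiOn pdCos (Ioo (0 : ℝ) (π / 2)) := by
    intro x hx y hy hxy
    obtain ⟨hxp, hx1⟩ := hsin x hx
    obtain ⟨hyp, hy1⟩ := hsin y hy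
    have hmono : Real.sin x < Real.sin y :=
      Real.strictMonoOn_sin
        ⟨by linarith [hx.1, Real.pi_pos], le_of_lt hx.2⟩
        ⟨by linarith [hy.1, Real.pi_pos], le_of_lt hy.2⟩ hxy
    have hab : Real.sin x ^ 6 < Real.sin y ^ 6 :=
      pow_lt_pow_left₀ hmono (le_of_lt hxp) (by norm_num)
    have hb1 : Real.sin y ^ 6 < 1 := by
      calc Real.sin y ^ 6 < 1 ^ 6 := pow_lt_pow_left₀ hy1 (le_of_lt hyp) (by norm_num)
      _ = 1 := by norm_num
    exact pd_g_anti (by positivity) hab hb1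
  have h3 : Tendsto pdCos (nhdsWithin 0 (Ioi (0 : ℝ))) (nhds 1) := by
    have := (pdCos_continuous.continuousAt (x := 0)).continuousWithinAt
      (s := Ioi (0:ℝ))
    rw [ContinuousWithinAt, pdCos_zero] at this
    exact this
  have h4 : Tendsto pdCos (nhdsWithin (π / 2) (Iio (π / 2))) (nhds 0) := by
    have := (pdCos_continuous.continuousAt (x := π / 2)).continuousWithinAt
      (s := Iio (π / 2))
    rw [ContinuousWithinAt, pdCos_pi_div_two] at this
    exact this
  have h5 : Tendsto (fun r => Real.arccos (pdCos r)) (nhdsWithin 0 (Ioi (0 : ℝ)))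
      (nhds 0) := by
    have hc : Tendsto Real.arccos (nhds 1) (nhds 0) := by
      have := Real.continuous_arccos.continuousAt (x := (1:ℝ))
      rwa [ContinuousAt, Real.arccos_one] at this
    exact hc.comp h3
  have h6 : Tendsto (fun r => Real.arccos (pdCos r))
      (nhdsWithin (π / 2) (Iio (π / 2))) (nhds (π / 2)) := by
    have hc : Tendsto Real.arccos (nhds 0) (nhds (π / 2)) := by
      have := Real.continuous_arccos.continuousAt (x := (0:ℝ))
      rwa [ContinuousAt, Real.arccos_zero] at this
    exact hc.comp h4
  exact ⟨h1, h2, h3, h4, h5, h6⟩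
end

section
/- Let 0 ≤ r < π/2 and define g(r) = (1 − sin⁵ r)/√((1 + sin⁵ r)² + (1/6) sin⁵ r). Then for all r ∈ (0, π/2), 0 < g(r) < 1, and 1 − g(r) = O(r⁵) as r → 0⁺; more precisely (1 − g(r))/r⁵ converges to a positive finite limit as r → 0⁺. -/
open Real Filter Set Asymptotics

noncomputable def grCos (r : ℝ) : ℝ :=
  (1 - Real.sin r ^ 5) / Real.sqrt ((1 + Real.sin r ^ 5) ^ 2 + (1 / 6) * Real.sin r ^ 5)

lemma grCos_key {s : ℝ} (hs : 0 ≤ s) (hs1 : s < 1) :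
    1 - (1 - s) / Real.sqrt ((1 + s) ^ 2 + (1 / 6) * s)
      = (25 / 6) * s / (Real.sqrt ((1 + s) ^ 2 + (1 / 6) * s) *
        (Real.sqrt ((1 + s) ^ 2 + (1 / 6) * s) + (1 - s))) := by
  have hD : (0 : ℝ) < (1 + s) ^ 2 + (1 / 6) * s := by nlinarith
  set x := Real.sqrt ((1 + s) ^ 2 + (1 / 6) * s) with hx
  have hxpos : 0 < x := Real.sqrt_pos.mpr hD
  have hsq : x ^ 2 = (1 + s) ^ 2 + (1 / 6) * s := Real.sq_sqrt hD.le
  have hsum : 0 < x + (1 - s) := by linarith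
  field_simp
  nlinarith [hsq, hxpos, hsum]

lemma sin_mem {r : ℝ} (hr : r ∈ Ioo (0 : ℝ) (π / 2)) :
    0 < Real.sin r ∧ Real.sin r < 1 := by
  obtain ⟨h0, h2⟩ := hr
  have hs : 0 < Real.sin r := Real.sin_pos_of_pos_of_lt_pi h0 (h2.trans (by linarith [Real.pi_pos]))
  have hc : 0 < Real.cos r := Real.cos_pos_of_mem_Ioo ⟨by linarith [Real.pi_pos], h2⟩
  have := Real.sin_sq_add_cos_sq r
  exact ⟨hs, by nlinarith⟩

lemma tendsto_main :
    Tendsto (fun r => (1 - grCos r) / r ^ 5) (nhdsWithin 0 (Ioi (0 : ℝ)))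
      (nhds (25 / 12)) := by
  have hsin0 : Tendsto (fun r => Real.sin r ^ 5) (nhds (0:ℝ)) (nhds 0) := by
    convert (Real.continuous_sin.pow 5).tendsto 0 using 2 <;> simp
  have hsqrt : Tendsto (fun r => Real.sqrt ((1 + Real.sin r ^ 5) ^ 2 + (1/6) * Real.sin r ^ 5))
      (nhds (0:ℝ)) (nhds 1) := by
    have hc : Continuous fun r => Real.sqrt ((1 + Real.sin r ^ 5) ^ 2 + (1/6) * Real.sin r ^ 5) := by
      continuity
    have := hc.tendsto 0
    simpa using this
  have hden : Tendsto (fun r => Real.sqrt ((1 + Real.sin r ^ 5) ^ 2 + (1/6) * Real.sin r ^ 5) *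
      (Real.sqrt ((1 + Real.sin r ^ 5) ^ 2 + (1/6) * Real.sin r ^ 5) + (1 - Real.sin r ^ 5)))
      (nhds (0:ℝ)) (nhds 2) := by
    have h1 : Tendsto (fun r : ℝ => 1 - Real.sin r ^ 5) (nhds (0:ℝ)) (nhds (1 - 0)) :=
      Tendsto.sub tendsto_const_nhds hsin0
    have h2 : Tendsto (fun r => Real.sqrt ((1 + Real.sin r ^ 5) ^ 2 + (1/6) * Real.sin r ^ 5)
        + (1 - Real.sin r ^ 5)) (nhds (0:ℝ)) (nhds 2) := by
      have := hsqrt.add h1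
      norm_num at this
      exact this
    have := hsqrt.mul h2
    norm_num at this
    exact this
  have hA : Tendsto (fun r => (25/6 : ℝ) / (Real.sqrt ((1 + Real.sin r ^ 5) ^ 2 + (1/6) * Real.sin r ^ 5) *
      (Real.sqrt ((1 + Real.sin r ^ 5) ^ 2 + (1/6) * Real.sin r ^ 5) + (1 - Real.sin r ^ 5))))
      (nhds (0:ℝ)) (nhds (25/12)) := by
    have h3 : Tendsto (fun r => (25/6 : ℝ) / (Real.sqrt ((1 + Real.sin r ^ 5) ^ 2 + (1/6) * Real.sin r ^ 5) *
        (Real.sqrt ((1 + Real.sin r ^ 5) ^ 2 + (1/6) * Real.sin r ^ 5) + (1 - Real.sin r ^ 5))))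
        (nhds (0:ℝ)) (nhds ((25/6)/2)) :=
      Tendsto.div tendsto_const_nhds hden (by norm_num)
    norm_num at h3
    exact h3
  have hslope := hasDerivAt_iff_tendsto_slope.mp (Real.hasDerivAt_sin 0)
  have hB0 : Tendsto (fun x => Real.sin x / x) (nhdsWithin 0 {(0:ℝ)}ᶜ) (nhds 1) := by
    simpa [slope_fun_def, Real.cos_zero, div_eq_inv_mul] using hslope
  have hB : Tendsto (fun x => (Real.sin x / x) ^ 5) (nhdsWithin 0 (Ioi (0:ℝ))) (nhds 1) := by
    have := (hB0.mono_left (nhdsWithin_mono 0 (fun x (hx : x ∈ Ioi (0:ℝ)) => (ne_of_gt hx : x ≠ 0)))).pow 5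
    simpa using this
  have hmain : Tendsto (fun r => (25/6 : ℝ) / (Real.sqrt ((1 + Real.sin r ^ 5) ^ 2 + (1/6) * Real.sin r ^ 5) *
      (Real.sqrt ((1 + Real.sin r ^ 5) ^ 2 + (1/6) * Real.sin r ^ 5) + (1 - Real.sin r ^ 5)))
      * (Real.sin r / r) ^ 5) (nhdsWithin 0 (Ioi (0:ℝ))) (nhds (25/12)) := by
    have := (hA.mono_left nhdsWithin_le_nhds).mul hB
    simpa using this
  refine hmain.congr' ?_
  filter_upwards [Ioo_mem_nhdsGT_of_mem (by constructor <;> [rfl; positivity] :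
    (0:ℝ) ∈ Ico 0 (π/2))] with r hr
  obtain ⟨hs, hs1⟩ := sin_mem hr
  have hs5 : (0:ℝ) ≤ Real.sin r ^ 5 := by positivity
  have hs51 : Real.sin r ^ 5 < 1 := pow_lt_one₀ hs.le hs1 (by norm_num)
  have hkey := grCos_key hs5 hs51
  have hr0 : r ≠ 0 := ne_of_gt hr.1
  have hD : (0:ℝ) < (1 + Real.sin r ^ 5) ^ 2 + (1/6) * Real.sin r ^ 5 := by nlinarith
  have hx : 0 < Real.sqrt ((1 + Real.sin r ^ 5) ^ 2 + (1/6) * Real.sin r ^ 5) :=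
    Real.sqrt_pos.mpr hD
  have hsum : 0 < Real.sqrt ((1 + Real.sin r ^ 5) ^ 2 + (1/6) * Real.sin r ^ 5)
      + (1 - Real.sin r ^ 5) := by linarith
  simp only [grCos]
  rw [hkey]
  field_simp

/-- For `g(r) = (1 − sin⁵ r)/√((1 + sin⁵ r)² + (1/6) sin⁵ r)`:
`0 < g(r) < 1` for all `r ∈ (0, π/2)`; `1 − g(r) = O(r⁵)` as `r → 0⁺`; and more
precisely `(1 − g(r))/r⁵` converges to a positive finite limit as `r → 0⁺`. -/
theorem grCos_properties :
    (∀ r ∈ Ioo (0 : ℝ) (π / 2), 0 < grCos r ∧ grCos r < 1) ∧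
    (fun r => 1 - grCos r) =O[nhdsWithin 0 (Ioi (0 : ℝ))] (fun r => r ^ 5) ∧
    (∃ L : ℝ, 0 < L ∧
      Tendsto (fun r => (1 - grCos r) / r ^ 5) (nhdsWithin 0 (Ioi (0 : ℝ)))
        (nhds L)) := by
  refine ⟨?_, ?_, 25/12, by norm_num, tendsto_main⟩
  · intro r hr
    obtain ⟨hs, hs1⟩ := sin_mem hr
    have hs5 : (0:ℝ) ≤ Real.sin r ^ 5 := by positivity
    have hs51 : Real.sin r ^ 5 < 1 := pow_lt_one₀ hs.le hs1 (by norm_num)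
    have hD : (0:ℝ) < (1 + Real.sin r ^ 5) ^ 2 + (1/6) * Real.sin r ^ 5 := by nlinarith
    have hx : 0 < Real.sqrt ((1 + Real.sin r ^ 5) ^ 2 + (1/6) * Real.sin r ^ 5) :=
      Real.sqrt_pos.mpr hD
    constructor
    · exact div_pos (by linarith) hx
    · rw [grCos, div_lt_one hx]
      rw [show ((1:ℝ)/6) = (1/6 : ℝ) by norm_num] at *
      refine (Real.lt_sqrt (by linarith)).mpr ?_
      have hs5' : 0 < Real.sin r ^ 5 := by positivity
      nlinarith [hs5']
  · refine isBigO_of_div_tendsto_nhds ?_ (25/12) tendsto_main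
    filter_upwards [self_mem_nhdsWithin] with r (hr : 0 < r)
    intro h
    exact absurd h (by positivity)
end

section
/- Let M be a compact oriented Riemannian manifold with boundary and let ω ∈ Ω^p(M) solve the boundary value problem Δω = 0, i*ω = φ, i*(d*ω) = 0 for given φ ∈ Ω^p(∂M). If ω′ is another solution, then ω − ω′ is a Dirichlet harmonic field: d(ω−ω′) = 0, d*(ω−ω′) = 0, and i*(ω−ω′) = 0. Hence the solution is unique up to addition of an element of Harm^p_D(M). -/
/-- Let `ω` solve the boundary value problem `Δω = 0`, `i^*ω = φ`,
`i^*(d^*ω) = 0` (harmonicity `Δω = 0` is written equivalently as `dd^*ω = −d^*dω`) on a compact oriented Riemannian manifold with boundary.  If `ω'` is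
another solution, then `ω − ω'` is a Dirichlet harmonic field:  `d(ω−ω') = 0`,
`d^*(ω−ω') = 0` and `i^*(ω−ω') = 0`.  Hence the solution is unique up to addition of
an element of `Harm^p_D(M)`. -/
theorem bvp_solutions_differ_by_dirichlet_field
    {n : ℕ} {Ω : ℕ → Type} [∀ p, AddCommGroup (Ω p)] [∀ p, Module ℝ (Ω p)]
    {Ωb : ℕ → Type} [∀ p, AddCommGroup (Ωb p)] [∀ p, Module ℝ (Ωb p)]
    (H : HodgeData n Ω Ωb) (p : ℕ) (φ : Ωb (p + 1)) (ω ω' : Ω (p + 1))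
    (hlap : H.d p (H.δ (p + 1) ω) = - H.δ (p + 2) (H.d (p + 1) ω))
    (hpull : H.pull (p + 1) ω = φ)
    (hδbd : H.pull p (H.δ (p + 1) ω) = 0)
    (hlap' : H.d p (H.δ (p + 1) ω') = - H.δ (p + 2) (H.d (p + 1) ω'))
    (hpull' : H.pull (p + 1) ω' = φ)
    (hδbd' : H.pull p (H.δ (p + 1) ω') = 0) :
    H.d (p + 1) (ω - ω') = 0 ∧ H.δ (p + 1) (ω - ω') = 0 ∧
      H.pull (p + 1) (ω - ω') = 0 := by
  set η := ω - ω' with hη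
  have hpullη : H.pull (p + 1) η = 0 := by
    simp [hη, map_sub, hpull, hpull']
  have hδpullη : H.pull p (H.δ (p + 1) η) = 0 := by
    simp [hη, map_sub, hδbd, hδbd']
  have hlapη : H.d p (H.δ (p + 1) η) = - H.δ (p + 2) (H.d (p + 1) η) := by
    simp only [hη, map_sub, hlap, hlap']
    abel
  have g1 := H.green p (H.δ (p + 1) η) η
  rw [hδpullη] at g1
  simp only [map_zero, LinearMap.zero_apply] at g1
  -- g1 : inn (d δ η) η - inn (δη) (δη) = 0
  have g2 := H.green (p + 1) η (H.d (p + 1) η)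
  rw [hpullη] at g2
  simp only [map_zero, LinearMap.zero_apply] at g2
  -- g2 : inn (dη) (dη) - inn η (δ d η) = 0
  have e1 : H.inn p (H.δ (p + 1) η) (H.δ (p + 1) η)
      = - H.inn (p + 2) (H.d (p + 1) η) (H.d (p + 1) η) := by
    have h1 : H.inn (p + 1) (H.d p (H.δ (p + 1) η)) η
        = H.inn p (H.δ (p + 1) η) (H.δ (p + 1) η) := by linarith [g1]
    have h2 : H.inn (p + 2) (H.d (p + 1) η) (H.d (p + 1) η)
        = H.inn (p + 1) η (H.δ (p + 2) (H.d (p + 1) η)) := by linarith [g2]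
    rw [← h1, hlapη, map_neg, LinearMap.neg_apply, h2, H.inn_symm]
  have hd0 : H.inn (p + 2) (H.d (p + 1) η) (H.d (p + 1) η) = 0 := by
    have n1 := H.inn_self_nonneg p (H.δ (p + 1) η)
    have n2 := H.inn_self_nonneg (p + 2) (H.d (p + 1) η)
    linarith
  have hδ0 : H.inn p (H.δ (p + 1) η) (H.δ (p + 1) η) = 0 := by
    rw [e1, hd0, neg_zero]
  exact ⟨H.inn_def _ _ hd0, H.inn_def _ _ hδ0, hpullη⟩
end
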